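/- Let n > 2 be an integer and let q ∈ B_n with wt(q) ≤ 2^(n-1). If there exists a balanced q-nearly bent function in B_n, then ρ_q ≡ 0 (mod 4) when wt(q) is even, and ρ_q ≡ 2 (mod 4) when wt(q) is odd. -/

import Mathlib

open Finset Matrix

/-- Hamming weight of a Boolean function on `𝔽₂ⁿ`. -/
def wt {n : ℕ} (f : (Fin n → ZMod 2) → ZMod 2) : ℕ :=
  (Finset.univ.filter fun a => f a = 1).card

/-- Imbalance `I_f = Σ_a (-1)^{f(a)}`. -/
def imb {n : ℕ} (f : (Fin n → ZMod 2) → ZMod 2) : ℤ :=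
  ∑ a : Fin n → ZMod 2, (-1 : ℤ) ^ (f a).val

/-- q-transform coefficient `W_q(f)(A) = Σ_a (-1)^{f(a)+q(aA)}` (for `A` a matrix;
invertibility is imposed at use sites via `GL`). -/
def Wq {n : ℕ} (q f : (Fin n → ZMod 2) → ZMod 2)
    (A : Matrix (Fin n) (Fin n) (ZMod 2)) : ℤ :=
  ∑ a : Fin n → ZMod 2, (-1 : ℤ) ^ (f a + q (Matrix.vecMul a A)).val

/-- `ρ_q = ⌈ ((2^{2n} - I_q²)/(2^n - 1))^{1/2} ⌉`. -/
noncomputable def rho {n : ℕ} (q : (Fin n → ZMod 2) → ZMod 2) : ℤ :=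
  ⌈Real.sqrt (((2 : ℝ) ^ (2 * n) - (imb q : ℝ) ^ 2) / ((2 : ℝ) ^ n - 1))⌉

/-- `f` is affine: `f(x) = v·x + c`. -/
def IsAffine {n : ℕ} (f : (Fin n → ZMod 2) → ZMod 2) : Prop :=
  ∃ (v : Fin n → ZMod 2) (c : ZMod 2), ∀ x, f x = (∑ i, v i * x i) + c


section Aux

lemma sumExtend_inl {K V : Type*} [Field K] [AddCommGroup V] [Module K V]
    {k : ℕ} {v : Fin k → V} (hv : LinearIndependent K v) (i : Fin k) :
    Module.Basis.sumExtend hv (Sum.inl i) = v i := by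
  simp only [Module.Basis.sumExtend, Module.Basis.reindex_apply, Equiv.symm_symm]
  exact Module.Basis.extend_apply_self _ _

lemma exists_equiv_map {K V : Type*} [Field K] [AddCommGroup V] [Module K V]
    [FiniteDimensional K V] {k : ℕ} {v w : Fin k → V}
    (hv : LinearIndependent K v) (hw : LinearIndependent K w) :
    ∃ L : V ≃ₗ[K] V, ∀ i, L (v i) = w i := by
  classical
  let b := Module.Basis.sumExtend hv
  let b' := Module.Basis.sumExtend hw
  have F1 : Fintype (Fin k ⊕ (Module.Basis.sumExtendIndex hv)) := FiniteDimensional.fintypeBasisIndex b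
  have F2 : Fintype (Fin k ⊕ (Module.Basis.sumExtendIndex hw)) := FiniteDimensional.fintypeBasisIndex b'
  haveI : Finite (Module.Basis.sumExtendIndex hv) :=
    @Finite.of_injective _ _ (@Finite.of_fintype _ F1) Sum.inr Sum.inr_injective
  haveI : Finite (Module.Basis.sumExtendIndex hw) :=
    @Finite.of_injective _ _ (@Finite.of_fintype _ F2) Sum.inr Sum.inr_injective
  haveI : Fintype (Module.Basis.sumExtendIndex hv) := Fintype.ofFinite _
  haveI : Fintype (Module.Basis.sumExtendIndex hw) := Fintype.ofFinite _
  have hc : Fintype.card (Module.Basis.sumExtendIndex hv) = Fintype.card (Module.Basis.sumExtendIndex hw) := by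
    have h1 := Module.finrank_eq_nat_card_basis b
    have h2 := Module.finrank_eq_nat_card_basis b'
    rw [Nat.card_sum] at h1 h2
    simp only [Nat.card_eq_fintype_card] at h1 h2
    omega
  let e : (Fin k ⊕ (Module.Basis.sumExtendIndex hv)) ≃ (Fin k ⊕ (Module.Basis.sumExtendIndex hw)) :=
    Equiv.sumCongr (Equiv.refl _) (Fintype.equivOfCardEq hc)
  refine ⟨b.equiv b' e, fun i => ?_⟩
  have h1 : b (Sum.inl i) = v i := sumExtend_inl hv i
  rw [← h1, Module.Basis.equiv_apply]
  simpa [e] using sumExtend_inl hw i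

lemma exists_gl {n k : ℕ} {v w : Fin k → (Fin n → ZMod 2)}
    (hv : LinearIndependent (ZMod 2) v) (hw : LinearIndependent (ZMod 2) w) :
    ∃ A : GL (Fin n) (ZMod 2), ∀ i, Matrix.vecMul (v i) (A : Matrix (Fin n) (Fin n) (ZMod 2)) = w i := by
  obtain ⟨L, hL⟩ := exists_equiv_map hv hw
  have hcomp1 : ((L.symm : (Fin n → ZMod 2) →ₗ[ZMod 2] (Fin n → ZMod 2)) ∘ₗ (L : _ →ₗ[ZMod 2] _)) = LinearMap.id := by
    ext x; simp
  have hcomp2 : ((L : (Fin n → ZMod 2) →ₗ[ZMod 2] (Fin n → ZMod 2)) ∘ₗ (L.symm : _ →ₗ[ZMod 2] _)) = LinearMap.id := by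
    ext x; simp
  refine ⟨⟨(LinearMap.toMatrix' (L : _ →ₗ[ZMod 2] _))ᵀ, (LinearMap.toMatrix' (L.symm : _ →ₗ[ZMod 2] _))ᵀ, ?_, ?_⟩, ?_⟩
  · rw [← Matrix.transpose_mul, ← LinearMap.toMatrix'_comp, hcomp1]
    simp [LinearMap.toMatrix'_id]
  · rw [← Matrix.transpose_mul, ← LinearMap.toMatrix'_comp, hcomp2]
    simp [LinearMap.toMatrix'_id]
  · intro i
    show Matrix.vecMul (v i) ((LinearMap.toMatrix' (L : _ →ₗ[ZMod 2] _))ᵀ) = w i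
    rw [Matrix.vecMul_transpose, ← Matrix.toLin'_apply, Matrix.toLin'_toMatrix']
    simpa using hL i

lemma zmod2_cases (s : ZMod 2) : s = 0 ∨ s = 1 := by revert s; decide

lemma li_single {n : ℕ} {a : Fin n → ZMod 2} (ha : a ≠ 0) :
    LinearIndependent (ZMod 2) ![a] := by
  apply linearIndependent_unique_iff.mpr
  simpa using ha

lemma li_pair {n : ℕ} {a b : Fin n → ZMod 2} (ha : a ≠ 0) (hb : b ≠ 0) (hab : a ≠ b) :
    LinearIndependent (ZMod 2) ![a, b] := by
  rw [LinearIndependent.pair_iff]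
  intro s t h
  have hbb : b + b = 0 := by
    rw [← two_smul (ZMod 2) b, show (2 : ZMod 2) = 0 by decide, zero_smul]
  rcases zmod2_cases s with rfl | rfl <;> rcases zmod2_cases t with rfl | rfl <;>
    simp_all
  · exact absurd (eq_neg_of_add_eq_zero_left h) (by rwa [neg_eq_of_add_eq_zero_left hbb] at *)

lemma orbit_sum {G X : Type*} [Group G] [Fintype G] [Fintype X] [DecidableEq X]
    (m : X → G → X) (hm : ∀ x A B, m x (A * B) = m (m x A) B)
    (x₀ : X) (g : X → ℤ) :
    ∃ k : ℕ,
      (∑ A : G, g (m x₀ A)) = (k : ℤ) * (∑ y ∈ Finset.univ.filter (fun y => ∃ A : G, m x₀ A = y), g y)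
      ∧ Fintype.card G = k * (Finset.univ.filter (fun y => ∃ A : G, m x₀ A = y)).card := by
  classical
  set O := Finset.univ.filter (fun y => ∃ A : G, m x₀ A = y) with hO
  have hcard : ∀ y ∈ O, (Finset.univ.filter (fun A : G => m x₀ A = y)).card
      = (Finset.univ.filter (fun A : G => m x₀ A = m x₀ 1)).card := by
    intro y hy
    obtain ⟨B₀, hB₀⟩ := (Finset.mem_filter.mp hy).2
    apply Finset.card_bij' (fun A _ => A * B₀⁻¹) (fun A _ => A * B₀)
    · intro A hA
      simp only [Finset.mem_filter, Finset.mem_univ, true_and] at hA ⊢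
      calc m x₀ (A * B₀⁻¹) = m (m x₀ A) B₀⁻¹ := hm _ _ _
        _ = m (m x₀ B₀) B₀⁻¹ := by rw [hA, hB₀]
        _ = m x₀ (B₀ * B₀⁻¹) := (hm _ _ _).symm
        _ = m x₀ 1 := by rw [mul_inv_cancel]
    · intro A hA
      simp only [Finset.mem_filter, Finset.mem_univ, true_and] at hA ⊢
      calc m x₀ (A * B₀) = m (m x₀ A) B₀ := hm _ _ _
        _ = m (m x₀ 1) B₀ := by rw [hA]
        _ = m x₀ (1 * B₀) := (hm _ _ _).symm
        _ = y := by rw [one_mul, hB₀]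
    · intro A _; rw [mul_assoc, inv_mul_cancel, mul_one]
    · intro A _; rw [mul_assoc, mul_inv_cancel, mul_one]
  refine ⟨(Finset.univ.filter (fun A : G => m x₀ A = m x₀ 1)).card, ?_, ?_⟩
  · rw [Finset.sum_comp g (fun A : G => m x₀ A)]
    have himg : Finset.image (fun A : G => m x₀ A) Finset.univ = O := by
      ext y; simp [hO]
    rw [himg]
    rw [Finset.sum_congr rfl (fun y hy => by rw [hcard y hy])]
    rw [← Finset.smul_sum, nsmul_eq_mul]
  · have := Finset.card_eq_sum_card_fiberwise
      (f := fun A : G => m x₀ A) (s := Finset.univ) (t := O)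
      (fun A _ => by simp [hO])
    rw [← Finset.card_univ, this, Finset.sum_congr rfl (fun y hy => hcard y hy),
      Finset.sum_const, smul_eq_mul, mul_comm]

variable {n : ℕ}

lemma vecMul_unit_cancel (A : GL (Fin n) (ZMod 2)) (a : Fin n → ZMod 2) :
    Matrix.vecMul (Matrix.vecMul a (A : Matrix (Fin n) (Fin n) (ZMod 2))) ((A⁻¹ : GL (Fin n) (ZMod 2)) : Matrix (Fin n) (Fin n) (ZMod 2)) = a := by
  rw [Matrix.vecMul_vecMul]
  norm_cast
  rw [mul_inv_cancel]
  exact Matrix.vecMul_one a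

lemma card_V : Fintype.card (Fin n → ZMod 2) = 2 ^ n := by
  simp [Fintype.card_fun]

lemma card_nonzeros :
    (Finset.univ.filter (fun c : Fin n → ZMod 2 => c ≠ 0)).card = 2 ^ n - 1 := by
  rw [Finset.filter_ne', Finset.card_erase_of_mem (Finset.mem_univ _), Finset.card_univ, card_V]

lemma hm_single : ∀ (x : Fin n → ZMod 2) (A B : GL (Fin n) (ZMod 2)),
    Matrix.vecMul x ((A * B : GL (Fin n) (ZMod 2)) : Matrix (Fin n) (Fin n) (ZMod 2))
      = Matrix.vecMul (Matrix.vecMul x (A : Matrix (Fin n) (Fin n) (ZMod 2))) (B : Matrix (Fin n) (Fin n) (ZMod 2)) := by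
  intro x A B
  rw [Matrix.vecMul_vecMul]
  norm_cast

lemma single_orbit_sum {a : Fin n → ZMod 2} (ha : a ≠ 0) (g : (Fin n → ZMod 2) → ℤ) :
    ((2 : ℤ) ^ n - 1) * ∑ A : GL (Fin n) (ZMod 2), g (Matrix.vecMul a (A : Matrix (Fin n) (Fin n) (ZMod 2)))
      = (Fintype.card (GL (Fin n) (ZMod 2)) : ℤ) * ∑ c ∈ Finset.univ.filter (fun c : Fin n → ZMod 2 => c ≠ 0), g c := by
  classical
  obtain ⟨k, hsum, hcard⟩ := orbit_sum
    (fun (x : Fin n → ZMod 2) (A : GL (Fin n) (ZMod 2)) => Matrix.vecMul x (A : Matrix (Fin n) (Fin n) (ZMod 2)))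
    hm_single a g
  have horb : Finset.univ.filter (fun y => ∃ A : GL (Fin n) (ZMod 2),
      Matrix.vecMul a (A : Matrix (Fin n) (Fin n) (ZMod 2)) = y)
      = Finset.univ.filter (fun c : Fin n → ZMod 2 => c ≠ 0) := by
    ext c
    simp only [Finset.mem_filter, Finset.mem_univ, true_and]
    constructor
    · rintro ⟨A, rfl⟩ hc
      apply ha
      have := vecMul_unit_cancel A a
      rw [hc, Matrix.zero_vecMul] at this
      exact this.symm
    · intro hc
      obtain ⟨A, hA⟩ := exists_gl (li_single ha) (li_single hc)
      exact ⟨A, by simpa using hA 0⟩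
  rw [horb] at hsum hcard
  rw [hsum, card_nonzeros] at *
  rw [hcard]
  have h1 : (1 : ℕ) ≤ 2 ^ n := Nat.one_le_two_pow
  push_cast [Nat.cast_sub h1]
  ring

lemma card_pair_compl {c : Fin n → ZMod 2} (hc : c ≠ 0) :
    (Finset.univ.filter (fun d : Fin n → ZMod 2 => d ≠ 0 ∧ d ≠ c)).card = 2 ^ n - 2 := by
  have : Finset.univ.filter (fun d : Fin n → ZMod 2 => d ≠ 0 ∧ d ≠ c)
      = Finset.univ \ {0, c} := by
    ext d; simp [not_or]
  rw [this, Finset.card_sdiff_of_subset (Finset.subset_univ _), Finset.card_univ, card_V,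
    Finset.card_insert_of_notMem (by simpa using (Ne.symm hc)), Finset.card_singleton]

lemma card_pairs :
    (Finset.univ.filter (fun p : (Fin n → ZMod 2) × (Fin n → ZMod 2) =>
      p.1 ≠ 0 ∧ p.2 ≠ 0 ∧ p.1 ≠ p.2)).card = (2 ^ n - 1) * (2 ^ n - 2) := by
  classical
  set P := Finset.univ.filter (fun p : (Fin n → ZMod 2) × (Fin n → ZMod 2) =>
      p.1 ≠ 0 ∧ p.2 ≠ 0 ∧ p.1 ≠ p.2) with hP
  rw [Finset.card_eq_sum_card_fiberwise
    (f := Prod.fst) (t := Finset.univ.filter (fun c : Fin n → ZMod 2 => c ≠ 0))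
    (fun p hp => by simp only [hP, Finset.mem_coe, Finset.mem_filter] at hp ⊢; exact ⟨Finset.mem_univ _, hp.2.1⟩)]
  have hfib : ∀ c ∈ Finset.univ.filter (fun c : Fin n → ZMod 2 => c ≠ 0),
      (P.filter (fun p => p.1 = c)).card = 2 ^ n - 2 := by
    intro c hc
    have hc' : c ≠ 0 := (Finset.mem_filter.mp hc).2
    rw [← card_pair_compl hc']
    refine Finset.card_bij' (fun p _ => p.2) (fun d _ => (c, d)) ?_ ?_ ?_ ?_
    · intro p hp
      simp only [hP, Finset.mem_filter, Finset.mem_univ, true_and] at hp ⊢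
      obtain ⟨⟨h1, h2, h3⟩, h4⟩ := hp
      exact ⟨h2, by rw [← h4]; exact fun h => h3 h.symm⟩
    · intro d hd
      simp only [hP, Finset.mem_filter, Finset.mem_univ, true_and] at hd ⊢
      exact ⟨⟨hc', hd.1, fun h => hd.2 h.symm⟩, trivial⟩
    · intro p hp
      simp only [hP, Finset.mem_filter] at hp
      exact Prod.ext hp.2.symm rfl
    · intro d _; rfl
  rw [Finset.sum_congr rfl hfib, Finset.sum_const, smul_eq_mul,
    Finset.filter_ne', Finset.card_erase_of_mem (Finset.mem_univ _), Finset.card_univ, card_V]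

lemma pair_orbit_sum (hn : 2 ≤ n) {a b : Fin n → ZMod 2} (ha : a ≠ 0) (hb : b ≠ 0) (hab : a ≠ b)
    (g : (Fin n → ZMod 2) × (Fin n → ZMod 2) → ℤ) :
    ((2 : ℤ) ^ n - 1) * ((2 : ℤ) ^ n - 2) * ∑ A : GL (Fin n) (ZMod 2),
        g (Matrix.vecMul a (A : Matrix (Fin n) (Fin n) (ZMod 2)), Matrix.vecMul b (A : Matrix (Fin n) (Fin n) (ZMod 2)))
      = (Fintype.card (GL (Fin n) (ZMod 2)) : ℤ) *
        ∑ p ∈ Finset.univ.filter (fun p : (Fin n → ZMod 2) × (Fin n → ZMod 2) =>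
          p.1 ≠ 0 ∧ p.2 ≠ 0 ∧ p.1 ≠ p.2), g p := by
  classical
  obtain ⟨k, hsum, hcard⟩ := orbit_sum
    (fun (p : (Fin n → ZMod 2) × (Fin n → ZMod 2)) (A : GL (Fin n) (ZMod 2)) =>
      (Matrix.vecMul p.1 (A : Matrix (Fin n) (Fin n) (ZMod 2)),
       Matrix.vecMul p.2 (A : Matrix (Fin n) (Fin n) (ZMod 2))))
    (by
      intro x A B
      have h1 := Matrix.vecMul_vecMul x.1 (A : Matrix (Fin n) (Fin n) (ZMod 2)) (B : Matrix (Fin n) (Fin n) (ZMod 2))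
      have h2 := Matrix.vecMul_vecMul x.2 (A : Matrix (Fin n) (Fin n) (ZMod 2)) (B : Matrix (Fin n) (Fin n) (ZMod 2))
      simp [Units.val_mul, Matrix.vecMul_vecMul])
    (a, b) g
  have horb : Finset.univ.filter (fun p : (Fin n → ZMod 2) × (Fin n → ZMod 2) =>
      ∃ A : GL (Fin n) (ZMod 2),
        (Matrix.vecMul a (A : Matrix (Fin n) (Fin n) (ZMod 2)),
         Matrix.vecMul b (A : Matrix (Fin n) (Fin n) (ZMod 2))) = p)
      = Finset.univ.filter (fun p : (Fin n → ZMod 2) × (Fin n → ZMod 2) =>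
          p.1 ≠ 0 ∧ p.2 ≠ 0 ∧ p.1 ≠ p.2) := by
    ext p
    simp only [Finset.mem_filter, Finset.mem_univ, true_and]
    constructor
    · rintro ⟨A, rfl⟩
      refine ⟨?_, ?_, ?_⟩ <;> dsimp only
      · intro hc
        apply ha
        have := vecMul_unit_cancel A a
        rw [hc, Matrix.zero_vecMul] at this; exact this.symm
      · intro hc
        apply hb
        have := vecMul_unit_cancel A b
        rw [hc, Matrix.zero_vecMul] at this; exact this.symm
      · intro hc
        apply hab
        have h1 := vecMul_unit_cancel A a
        have h2 := vecMul_unit_cancel A b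
        rw [hc, h2] at h1
        rw [← h1]
    · rintro ⟨h1, h2, h3⟩
      obtain ⟨A, hA⟩ := exists_gl (li_pair ha hb hab) (li_pair h1 h2 h3)
      refine ⟨A, ?_⟩
      have e0 := hA 0
      have e1 := hA 1
      simp only [Matrix.cons_val_zero, Matrix.cons_val_one, Matrix.head_cons] at e0 e1
      rw [e0, e1]
  rw [horb] at hsum hcard
  rw [hsum, card_pairs] at *
  rw [hcard]
  have h2 : (2 : ℕ) ≤ 2 ^ n := by
    calc (2:ℕ) = 2^1 := rfl
    _ ≤ 2^n := Nat.pow_le_pow_right (by norm_num) (le_trans (by norm_num) hn)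
  have h1 : (1 : ℕ) ≤ 2 ^ n := le_trans (by norm_num) h2
  push_cast [Nat.cast_sub h1, Nat.cast_sub h2]
  ring

lemma double_split {V : Type*} [Fintype V] [DecidableEq V] [Zero V]
    (c : V → ℤ) (τ : V → V → ℤ) (D E Q : ℤ)
    (hdiag : ∀ a, τ a a = D)
    (hA : ∀ b, b ≠ 0 → τ 0 b = E) (hB : ∀ a, a ≠ 0 → τ a 0 = E)
    (hQ : ∀ a b, a ≠ 0 → b ≠ 0 → a ≠ b → τ a b = Q)
    (hbal : ∑ a : V, c a = 0) (hsq : ∀ a, c a * c a = 1) :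
    ∑ a : V, ∑ b : V, c a * c b * τ a b
      = (Fintype.card V : ℤ) * D - 2 * E + (2 - (Fintype.card V : ℤ)) * Q := by
  classical
  have hc0 : ∑ b : V, (if b = 0 then (1:ℤ) else 0) * c b = c 0 := by
    simp only [ite_mul, one_mul, zero_mul]
    rw [Finset.sum_ite_eq' Finset.univ 0 c]
    simp
  have ptw : ∀ a b : V, c a * c b * τ a b
      = c a * c b * Q
        + (D - Q) * (if a = b then c a * c b else 0)
        + (E - Q) * (((if a = 0 then (1:ℤ) else 0) * c a) * c b)
        + (E - Q) * (c a * ((if b = 0 then (1:ℤ) else 0) * c b))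
        - 2 * (E - Q) * (((if a = 0 then (1:ℤ) else 0) * c a) * ((if b = 0 then (1:ℤ) else 0) * c b)) := by
    intro a b
    by_cases hab : a = b
    · subst hab
      by_cases ha : a = 0
      · subst ha; simp [hdiag] <;> ring
      · simp [hdiag, ha] <;> ring
    · by_cases ha : a = 0
      · subst ha
        have hb : b ≠ 0 := fun h => hab h.symm
        simp [hA b hb, hb, Ne.symm hb] <;> ring
      · by_cases hb : b = 0
        · subst hb; simp [hB a ha, ha] <;> ring
        · simp [hQ a b ha hb hab, ha, hb, hab] <;> ring
  rw [Finset.sum_congr rfl fun a _ => Finset.sum_congr rfl fun b _ => ptw a b]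
  simp only [Finset.sum_add_distrib, Finset.sum_sub_distrib]
  have h1 : ∑ a : V, ∑ b : V, c a * c b * Q = 0 := by
    have inner : ∀ a : V, ∑ b : V, c a * c b * Q = (c a * Q) * ∑ b : V, c b := by
      intro a; rw [Finset.mul_sum]; exact Finset.sum_congr rfl fun b _ => by ring
    simp only [inner, hbal, mul_zero, Finset.sum_const_zero]
  have h2 : ∑ a : V, ∑ b : V, (D - Q) * (if a = b then c a * c b else 0)
      = (Fintype.card V : ℤ) * (D - Q) := by
    have inner : ∀ a : V, ∑ b : V, (D - Q) * (if a = b then c a * c b else 0) = D - Q := by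
      intro a
      rw [← Finset.mul_sum, Finset.sum_ite_eq]
      simp [hsq a]
    simp only [inner, Finset.sum_const, Finset.card_univ, smul_eq_mul]
    ring
  have h3 : ∑ a : V, ∑ b : V, (E - Q) * (((if a = 0 then (1:ℤ) else 0) * c a) * c b) = 0 := by
    have inner : ∀ a : V, ∑ b : V, (E - Q) * (((if a = 0 then (1:ℤ) else 0) * c a) * c b)
        = ((E - Q) * ((if a = 0 then (1:ℤ) else 0) * c a)) * ∑ b : V, c b := by
      intro a; rw [Finset.mul_sum]; exact Finset.sum_congr rfl fun b _ => by ring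
    simp only [inner, hbal, mul_zero, Finset.sum_const_zero]
  have h4 : ∑ a : V, ∑ b : V, (E - Q) * (c a * ((if b = 0 then (1:ℤ) else 0) * c b)) = 0 := by
    have inner : ∀ a : V, ∑ b : V, (E - Q) * (c a * ((if b = 0 then (1:ℤ) else 0) * c b))
        = ((E - Q) * c a) * ∑ b : V, (if b = 0 then (1:ℤ) else 0) * c b := by
      intro a; rw [Finset.mul_sum]; exact Finset.sum_congr rfl fun b _ => by ring
    simp only [inner, hc0]
    rw [← Finset.sum_mul, ← Finset.mul_sum, hbal, mul_zero, zero_mul]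
  have h5 : ∑ a : V, ∑ b : V,
      2 * (E - Q) * (((if a = 0 then (1:ℤ) else 0) * c a) * ((if b = 0 then (1:ℤ) else 0) * c b))
      = 2 * (E - Q) := by
    have inner : ∀ a : V, ∑ b : V,
        2 * (E - Q) * (((if a = 0 then (1:ℤ) else 0) * c a) * ((if b = 0 then (1:ℤ) else 0) * c b))
        = ((2 * (E - Q)) * ((if a = 0 then (1:ℤ) else 0) * c a)) * ∑ b : V, (if b = 0 then (1:ℤ) else 0) * c b := by
      intro a; rw [Finset.mul_sum]; exact Finset.sum_congr rfl fun b _ => by ring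
    simp only [inner, hc0]
    have swap : ∀ a : V, (2 * (E - Q)) * ((if a = 0 then (1:ℤ) else 0) * c a) * c 0
        = ((2 * (E - Q)) * c 0) * ((if a = 0 then (1:ℤ) else 0) * c a) := fun a => by ring
    rw [Finset.sum_congr rfl fun a _ => swap a, ← Finset.mul_sum, hc0]
    linear_combination (2 * (E - Q)) * hsq 0
  rw [h1, h2, h3, h4, h5]
  ring

lemma chi_add : ∀ x y : ZMod 2, ((-1:ℤ))^(x+y).val = (-1)^x.val * (-1)^y.val := by decide
lemma chi_sq : ∀ x : ZMod 2, ((-1:ℤ))^x.val * (-1)^x.val = 1 := by decide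
lemma chi_eq : ∀ x : ZMod 2, ((-1:ℤ))^x.val = 1 - 2*(x.val:ℤ) := by decide


lemma wt_eq_sum (f : (Fin n → ZMod 2) → ZMod 2) :
    wt f = ∑ a : Fin n → ZMod 2, (f a).val := by
  rw [wt]
  rw [Finset.card_eq_sum_ones, Finset.sum_filter]
  exact Finset.sum_congr rfl fun a _ => by
    rcases (by decide : ∀ x : ZMod 2, x.val = if x = 1 then 1 else 0) (f a) with h
    rw [h]

lemma imb_eq (f : (Fin n → ZMod 2) → ZMod 2) :
    imb f = 2 ^ n - 2 * (wt f : ℤ) := by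
  rw [imb, wt_eq_sum]
  push_cast
  rw [Finset.sum_congr rfl fun a _ => chi_eq (f a), Finset.sum_sub_distrib,
    Finset.sum_const, Finset.card_univ, card_V, ← Finset.mul_sum]
  push_cast
  ring

lemma pair_sum_eval (u : (Fin n → ZMod 2) → ℤ) (husq : ∀ c, u c * u c = 1) :
    ∑ p ∈ Finset.univ.filter (fun p : (Fin n → ZMod 2) × (Fin n → ZMod 2) =>
        p.1 ≠ 0 ∧ p.2 ≠ 0 ∧ p.1 ≠ p.2), u p.1 * u p.2
      = (∑ c ∈ Finset.univ.filter (fun c : Fin n → ZMod 2 => c ≠ 0), u c) ^ 2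
        - (((Finset.univ.filter (fun c : Fin n → ZMod 2 => c ≠ 0)).card : ℤ)) := by
  classical
  rw [Finset.sum_filter, Fintype.sum_prod_type]
  have ptw : ∀ c d : Fin n → ZMod 2,
      (if c ≠ 0 ∧ d ≠ 0 ∧ c ≠ d then u c * u d else 0)
      = (if c ≠ 0 then u c else 0) * (if d ≠ 0 then u d else 0)
        - (if c = d then (if c ≠ 0 then (1:ℤ) else 0) else 0) := by
    intro c d
    by_cases hc : c = 0 <;> by_cases hd : d = 0 <;> by_cases hcd : c = d <;>
      simp_all [husq]
  rw [Finset.sum_congr rfl fun c _ => Finset.sum_congr rfl fun d _ => ptw c d]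
  simp only [Finset.sum_sub_distrib]
  have h1 : ∑ c : Fin n → ZMod 2, ∑ d : Fin n → ZMod 2,
      (if c ≠ 0 then u c else 0) * (if d ≠ 0 then u d else 0)
      = (∑ c ∈ Finset.univ.filter (fun c : Fin n → ZMod 2 => c ≠ 0), u c) ^ 2 := by
    rw [← Finset.sum_mul_sum, ← Finset.sum_filter, sq]
  have h2 : ∑ c : Fin n → ZMod 2, ∑ d : Fin n → ZMod 2,
      (if c = d then (if c ≠ 0 then (1:ℤ) else 0) else 0)
      = ((Finset.univ.filter (fun c : Fin n → ZMod 2 => c ≠ 0)).card : ℤ) := by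
    have inner : ∀ c : Fin n → ZMod 2, ∑ d : Fin n → ZMod 2,
        (if c = d then (if c ≠ 0 then (1:ℤ) else 0) else 0) = (if c ≠ 0 then (1:ℤ) else 0) := by
      intro c
      rw [Finset.sum_ite_eq]
      simp
    rw [Finset.sum_congr rfl fun c _ => inner c, ← Finset.sum_filter, Finset.sum_const]
    simp
  rw [h1, h2]

lemma key_identity (hn : 2 ≤ n) (q f : (Fin n → ZMod 2) → ZMod 2) (hf : wt f = 2 ^ (n - 1)) :
    ((2:ℤ)^n - 1) * (((2:ℤ)^n - 2) * ∑ A : GL (Fin n) (ZMod 2), (Wq q f (A : Matrix (Fin n) (Fin n) (ZMod 2)))^2)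
      = (Fintype.card (GL (Fin n) (ZMod 2)) : ℤ) * (((2:ℤ)^n - 2) * ((2:ℤ)^(2*n) - (imb q)^2)) := by
  classical
  set u : (Fin n → ZMod 2) → ℤ := fun c => (-1:ℤ)^((q c).val) with hu
  set cf : (Fin n → ZMod 2) → ℤ := fun a => (-1:ℤ)^((f a).val) with hcf
  set cardG : ℤ := (Fintype.card (GL (Fin n) (ZMod 2)) : ℤ) with hcardG
  set U : ℤ := ∑ c ∈ Finset.univ.filter (fun c : Fin n → ZMod 2 => c ≠ 0), u c with hU
  have husq : ∀ c, u c * u c = 1 := fun c => chi_sq _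
  have hcfsq : ∀ a, cf a * cf a = 1 := fun a => chi_sq _
  have hbal : ∑ a : Fin n → ZMod 2, cf a = 0 := by
    have h1 : imb f = 0 := by
      rw [imb_eq, hf]
      have : (2:ℤ) * 2 ^ (n-1) = 2 ^ n := by
        rw [← pow_succ']
        congr 1
        omega
      push_cast
      rw [this]
      ring
    rw [← h1, imb]
  -- expand Wq
  have hWq : ∀ A : GL (Fin n) (ZMod 2),
      Wq q f (A : Matrix (Fin n) (Fin n) (ZMod 2))
        = ∑ a : Fin n → ZMod 2, cf a * u (Matrix.vecMul a (A : Matrix (Fin n) (Fin n) (ZMod 2))) := by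
    intro A
    rw [Wq]
    exact Finset.sum_congr rfl fun a _ => chi_add _ _
  set T : (Fin n → ZMod 2) → (Fin n → ZMod 2) → ℤ := fun a b =>
    ∑ A : GL (Fin n) (ZMod 2),
      u (Matrix.vecMul a (A : Matrix (Fin n) (Fin n) (ZMod 2)))
        * u (Matrix.vecMul b (A : Matrix (Fin n) (Fin n) (ZMod 2))) with hT
  have hS : ∑ A : GL (Fin n) (ZMod 2), (Wq q f (A : Matrix (Fin n) (Fin n) (ZMod 2)))^2
      = ∑ a : Fin n → ZMod 2, ∑ b : Fin n → ZMod 2, cf a * cf b * T a b := by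
    have step1 : ∀ A : GL (Fin n) (ZMod 2),
        (Wq q f (A : Matrix (Fin n) (Fin n) (ZMod 2)))^2
        = ∑ a : Fin n → ZMod 2, ∑ b : Fin n → ZMod 2,
            (cf a * cf b) * (u (Matrix.vecMul a (A : Matrix (Fin n) (Fin n) (ZMod 2)))
              * u (Matrix.vecMul b (A : Matrix (Fin n) (Fin n) (ZMod 2)))) := by
      intro A
      rw [hWq A, sq, Finset.sum_mul_sum]
      exact Finset.sum_congr rfl fun a _ => Finset.sum_congr rfl fun b _ => by ring
    rw [Finset.sum_congr rfl fun A _ => step1 A]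
    rw [Finset.sum_comm]
    refine Finset.sum_congr rfl fun a _ => ?_
    rw [Finset.sum_comm]
    refine Finset.sum_congr rfl fun b _ => ?_
    rw [hT, Finset.mul_sum]
  -- apply double_split to τ = M * T
  set M : ℤ := ((2:ℤ)^n - 1) * ((2:ℤ)^n - 2) with hM
  have hu0sq : u 0 * u 0 = 1 := husq 0
  have hsplit := double_split (V := Fin n → ZMod 2) cf (fun a b => M * T a b)
    (M * cardG) (((2:ℤ)^n - 2) * (u 0 * (cardG * U))) (cardG * (U^2 - ((2:ℤ)^n - 1)))
    (by
      intro a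
      show M * T a a = M * cardG
      have : T a a = cardG := by
        rw [hT]
        simp only
        rw [Finset.sum_congr rfl fun A _ => husq _, Finset.sum_const, Finset.card_univ]
        simp [hcardG]
      rw [this])
    (by
      intro b hb
      have h0 : ∀ A : GL (Fin n) (ZMod 2),
          u (Matrix.vecMul (0 : Fin n → ZMod 2) (A : Matrix (Fin n) (Fin n) (ZMod 2))) = u 0 := by
        intro A; rw [Matrix.zero_vecMul]
      have hsum := single_orbit_sum hb u
      show M * T 0 b = ((2:ℤ)^n - 2) * (u 0 * (cardG * U))
      have : T 0 b = u 0 * ∑ A : GL (Fin n) (ZMod 2),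
          u (Matrix.vecMul b (A : Matrix (Fin n) (Fin n) (ZMod 2))) := by
        rw [hT]
        simp only
        rw [Finset.mul_sum]
        exact Finset.sum_congr rfl fun A _ => by rw [h0 A]
      rw [this, hM]
      calc ((2:ℤ)^n - 1) * ((2:ℤ)^n - 2) * (u 0 * ∑ A : GL (Fin n) (ZMod 2),
            u (Matrix.vecMul b (A : Matrix (Fin n) (Fin n) (ZMod 2))))
          = ((2:ℤ)^n - 2) * (u 0 * (((2:ℤ)^n - 1) * ∑ A : GL (Fin n) (ZMod 2),
            u (Matrix.vecMul b (A : Matrix (Fin n) (Fin n) (ZMod 2))))) := by ring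
        _ = ((2:ℤ)^n - 2) * (u 0 * (cardG * U)) := by rw [hsum])
    (by
      intro a ha
      have h0 : ∀ A : GL (Fin n) (ZMod 2),
          u (Matrix.vecMul (0 : Fin n → ZMod 2) (A : Matrix (Fin n) (Fin n) (ZMod 2))) = u 0 := by
        intro A; rw [Matrix.zero_vecMul]
      have hsum := single_orbit_sum ha u
      show M * T a 0 = ((2:ℤ)^n - 2) * (u 0 * (cardG * U))
      have : T a 0 = u 0 * ∑ A : GL (Fin n) (ZMod 2),
          u (Matrix.vecMul a (A : Matrix (Fin n) (Fin n) (ZMod 2))) := by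
        rw [hT]
        simp only
        rw [Finset.mul_sum]
        exact Finset.sum_congr rfl fun A _ => by rw [h0 A]; ring
      rw [this, hM]
      calc ((2:ℤ)^n - 1) * ((2:ℤ)^n - 2) * (u 0 * ∑ A : GL (Fin n) (ZMod 2),
            u (Matrix.vecMul a (A : Matrix (Fin n) (Fin n) (ZMod 2))))
          = ((2:ℤ)^n - 2) * (u 0 * (((2:ℤ)^n - 1) * ∑ A : GL (Fin n) (ZMod 2),
            u (Matrix.vecMul a (A : Matrix (Fin n) (Fin n) (ZMod 2))))) := by ring
        _ = ((2:ℤ)^n - 2) * (u 0 * (cardG * U)) := by rw [hsum, hcardG, hU])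
    (by
      intro a b ha hb hab
      show M * T a b = cardG * (U^2 - ((2:ℤ)^n - 1))
      have hps := pair_orbit_sum hn ha hb hab (fun p => u p.1 * u p.2)
      have hval := pair_sum_eval u husq
      rw [hT]
      simp only
      rw [hM]
      rw [show ((2:ℤ)^n - 1) * ((2:ℤ)^n - 2) *
          ∑ A : GL (Fin n) (ZMod 2),
            u (Matrix.vecMul a (A : Matrix (Fin n) (Fin n) (ZMod 2)))
              * u (Matrix.vecMul b (A : Matrix (Fin n) (Fin n) (ZMod 2)))
          = (Fintype.card (GL (Fin n) (ZMod 2)) : ℤ) *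
            ∑ p ∈ Finset.univ.filter (fun p : (Fin n → ZMod 2) × (Fin n → ZMod 2) =>
              p.1 ≠ 0 ∧ p.2 ≠ 0 ∧ p.1 ≠ p.2), u p.1 * u p.2 from hps]
      rw [hval, card_nonzeros, ← hcardG, ← hU]
      have h1 : (1:ℕ) ≤ 2^n := Nat.one_le_two_pow
      push_cast [Nat.cast_sub h1]
      ring)
    hbal hcfsq
  -- combine
  have hMS : M * (∑ A : GL (Fin n) (ZMod 2), (Wq q f (A : Matrix (Fin n) (Fin n) (ZMod 2)))^2)
      = ∑ a : Fin n → ZMod 2, ∑ b : Fin n → ZMod 2, cf a * cf b * (M * T a b) := by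
    rw [hS, Finset.mul_sum]
    refine Finset.sum_congr rfl fun a _ => ?_
    rw [Finset.mul_sum]
    exact Finset.sum_congr rfl fun b _ => by ring
  rw [show ((2:ℤ)^n - 1) * (((2:ℤ)^n - 2) * ∑ A : GL (Fin n) (ZMod 2), (Wq q f (A : Matrix (Fin n) (Fin n) (ZMod 2)))^2)
      = M * (∑ A : GL (Fin n) (ZMod 2), (Wq q f (A : Matrix (Fin n) (Fin n) (ZMod 2)))^2) from by rw [hM]; ring]
  rw [hMS, hsplit, card_V]
  -- final algebra; I = imb q, U = I - u 0
  have hUI : U = imb q - u 0 := by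
    have himb : imb q = ∑ c : Fin n → ZMod 2, u c := rfl
    have hadd := Finset.sum_erase_add Finset.univ u (Finset.mem_univ (0 : Fin n → ZMod 2))
    rw [hU, Finset.filter_ne', himb]
    linarith
  have hNN : ((2:ℤ))^(2*n) = ((2:ℤ)^n)^2 := by rw [← pow_mul]; ring_nf
  have hu0 : u 0 = 1 ∨ u 0 = -1 := by
    rcases Nat.even_or_odd ((q 0).val) with h | h
    · left; exact h.neg_one_pow
    · right; exact h.neg_one_pow
  rw [hUI, hNN]
  rcases hu0 with h | h <;> rw [h] <;> push_cast <;> ring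

lemma valcast : ∀ x : ZMod 2, ((x.val : ZMod 2)) = x := by decide

lemma W_mod4 (hn : 2 ≤ n) (q f : (Fin n → ZMod 2) → ZMod 2) (hf : wt f = 2 ^ (n - 1))
    (A : GL (Fin n) (ZMod 2)) :
    ((Wq q f (A : Matrix (Fin n) (Fin n) (ZMod 2)) : ZMod 4)) = ((2 * wt q : ℕ) : ZMod 4) := by
  classical
  set g : (Fin n → ZMod 2) → ZMod 2 := fun a => f a + q (Matrix.vecMul a (A : Matrix (Fin n) (Fin n) (ZMod 2))) with hg
  set t : ℕ := ∑ a : Fin n → ZMod 2, (g a).val with ht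
  have hWt : Wq q f (A : Matrix (Fin n) (Fin n) (ZMod 2)) = 2^n - 2 * (t:ℤ) := by
    rw [Wq, Finset.sum_congr rfl fun a _ => chi_eq _, Finset.sum_sub_distrib,
      Finset.sum_const, Finset.card_univ, card_V, ← Finset.mul_sum, ht]
    push_cast
    ring
  have hbij : Function.Bijective (fun a : Fin n → ZMod 2 => Matrix.vecMul a (A : Matrix (Fin n) (Fin n) (ZMod 2))) := by
    rw [Function.bijective_iff_has_inverse]
    refine ⟨fun c => Matrix.vecMul c ((A⁻¹ : GL (Fin n) (ZMod 2)) : Matrix (Fin n) (Fin n) (ZMod 2)), ?_, ?_⟩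
    · intro a; exact vecMul_unit_cancel A a
    · intro c
      have := vecMul_unit_cancel A⁻¹ c
      rwa [inv_inv] at this
  have hqsum : ∑ a : Fin n → ZMod 2, ((q (Matrix.vecMul a (A : Matrix (Fin n) (Fin n) (ZMod 2)))).val)
      = ∑ c : Fin n → ZMod 2, (q c).val :=
    Fintype.sum_bijective _ hbij _ _ (fun a => rfl)
  have hpar : (t : ZMod 2) = ((wt f + wt q : ℕ) : ZMod 2) := by
    rw [ht, wt_eq_sum, wt_eq_sum, ← hqsum]
    push_cast
    rw [Finset.sum_congr rfl fun a _ => valcast (g a),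
      Finset.sum_congr rfl fun a _ => valcast (f a),
      Finset.sum_congr rfl fun a _ => valcast (q _), ← Finset.sum_add_distrib]
  have hmod : (2*t) ≡ (2*(wt f + wt q)) [MOD 4] := by
    have h2 := Nat.ModEq.mul_left' (c := 2) ((ZMod.natCast_eq_natCast_iff _ _ _).mp hpar)
    simpa using h2
  have hcast4 : ((2*t : ℕ) : ZMod 4) = ((2*(wt f + wt q) : ℕ) : ZMod 4) :=
    (ZMod.natCast_eq_natCast_iff _ _ 4).mpr hmod
  have h2n : ((2 : ZMod 4))^n = 0 := by
    have hn' : n = 2 + (n-2) := by omega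
    rw [hn', pow_add, show ((2:ZMod 4))^2 = 0 from by decide, zero_mul]
  have h2f : ((2 * wt f : ℕ) : ZMod 4) = 0 := by
    have : 2 * wt f = 2^n := by
      rw [hf, ← pow_succ']
      congr 1
      omega
    rw [this]
    push_cast
    exact h2n
  have neg2 : ∀ m : ℕ, -(2*(m:ZMod 4)) = 2*(m:ZMod 4) := by
    intro m
    have h4 : (4:ZMod 4) = 0 := by decide
    linear_combination (-(m : ZMod 4)) * h4
  rw [hWt]
  push_cast [h2n]
  have : ((2:ZMod 4)) * (t : ZMod 4) = ((2*t : ℕ) : ZMod 4) := by push_cast; ring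
  rw [show (0:ZMod 4) - 2 * (t:ZMod 4) = -(2*(t:ZMod 4)) from by ring, this, hcast4]
  push_cast
  rw [show ((2:ZMod 4)) * ((wt f : ZMod 4) + (wt q : ZMod 4)) = (2*(wt f:ZMod 4)) + 2*(wt q : ZMod 4) from by ring]
  rw [show ((2:ZMod 4)) * (wt f : ZMod 4) = ((2 * wt f : ℕ) : ZMod 4) from by push_cast; ring, h2f]
  rw [show (0:ZMod 4) + 2*(wt q : ZMod 4) = 2*(wt q:ZMod 4) from by ring]
  rw [neg2]


end Aux

/-- Necessary condition: if a balanced `q`-nearly bent function exists, then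
`ρ_q ≡ 0 (mod 4)` when `wt q` is even and `ρ_q ≡ 2 (mod 4)` when `wt q` is odd. -/
theorem rho_mod_four (n : ℕ) (hn : 2 < n)
    (q : (Fin n → ZMod 2) → ZMod 2) (hw : wt q ≤ 2 ^ (n - 1))
    (h : ∃ f : (Fin n → ZMod 2) → ZMod 2,
        wt f = 2 ^ (n - 1) ∧ ∀ A : GL (Fin n) (ZMod 2), |Wq q f A.val| ≤ rho q) :
    (Even (wt q) → rho q ≡ 0 [ZMOD 4]) ∧ (Odd (wt q) → rho q ≡ 2 [ZMOD 4]) := by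
  classical
  obtain ⟨f, hf, hub⟩ := h
  have hn2 : 2 ≤ n := by omega
  have hkey := key_identity hn2 q f hf
  have h4le : (4:ℤ) ≤ 2^n := by
    calc (4:ℤ) = 2^2 := by norm_num
    _ ≤ 2^n := pow_le_pow_right₀ (by norm_num) hn2
  have hNm2 : (0:ℤ) < 2^n - 2 := by linarith
  have hNm1 : (0:ℤ) < 2^n - 1 := by linarith
  -- cancel (2^n - 2)
  have hkey' : ((2:ℤ)^n - 1) * ∑ A : GL (Fin n) (ZMod 2), (Wq q f (A : Matrix (Fin n) (Fin n) (ZMod 2)))^2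
      = (Fintype.card (GL (Fin n) (ZMod 2)) : ℤ) * ((2:ℤ)^(2*n) - (imb q)^2) := by
    apply mul_left_cancel₀ (ne_of_gt hNm2)
    calc ((2:ℤ)^n - 2) * (((2:ℤ)^n - 1) * ∑ A : GL (Fin n) (ZMod 2), (Wq q f (A : Matrix (Fin n) (Fin n) (ZMod 2)))^2)
        = ((2:ℤ)^n - 1) * (((2:ℤ)^n - 2) * ∑ A : GL (Fin n) (ZMod 2), (Wq q f (A : Matrix (Fin n) (Fin n) (ZMod 2)))^2) := by ring
      _ = (Fintype.card (GL (Fin n) (ZMod 2)) : ℤ) * (((2:ℤ)^n - 2) * ((2:ℤ)^(2*n) - (imb q)^2)) := hkey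
      _ = ((2:ℤ)^n - 2) * ((Fintype.card (GL (Fin n) (ZMod 2)) : ℤ) * ((2:ℤ)^(2*n) - (imb q)^2)) := by ring
  -- pigeonhole
  have hex : ∃ A : GL (Fin n) (ZMod 2),
      ((2:ℤ)^(2*n) - (imb q)^2) ≤ ((2:ℤ)^n - 1) * (Wq q f (A : Matrix (Fin n) (Fin n) (ZMod 2)))^2 := by
    have hne : (Finset.univ : Finset (GL (Fin n) (ZMod 2))).Nonempty := ⟨1, Finset.mem_univ 1⟩
    have hsum : ∑ _A : GL (Fin n) (ZMod 2), ((2:ℤ)^(2*n) - (imb q)^2)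
        ≤ ∑ A : GL (Fin n) (ZMod 2), ((2:ℤ)^n - 1) * (Wq q f (A : Matrix (Fin n) (Fin n) (ZMod 2)))^2 := by
      rw [← Finset.mul_sum, hkey', Finset.sum_const, Finset.card_univ, nsmul_eq_mul]
    obtain ⟨A, _, hA⟩ := Finset.exists_le_of_sum_le hne hsum
    exact ⟨A, hA⟩
  obtain ⟨A₀, hA₀⟩ := hex
  -- rho q = |Wq q f A₀|
  set W : ℤ := Wq q f ((A₀ : Matrix (Fin n) (Fin n) (ZMod 2))) with hW
  have hsqrt : Real.sqrt (((2 : ℝ) ^ (2 * n) - (imb q : ℝ) ^ 2) / ((2 : ℝ) ^ n - 1)) ≤ ((|W| : ℤ) : ℝ) := by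
    have hNm1R : (0:ℝ) < (2:ℝ)^n - 1 := by
      have : ((2:ℝ))^n = ((2^n : ℤ) : ℝ) := by push_cast; ring
      rw [this]
      exact_mod_cast hNm1
    have hdiv : ((2 : ℝ) ^ (2 * n) - (imb q : ℝ) ^ 2) / ((2 : ℝ) ^ n - 1) ≤ ((W : ℝ))^2 := by
      rw [div_le_iff₀ hNm1R]
      calc ((2 : ℝ) ^ (2 * n) - (imb q : ℝ) ^ 2) = (((2:ℤ)^(2*n) - (imb q)^2 : ℤ) : ℝ) := by push_cast; ring
        _ ≤ ((((2:ℤ)^n - 1) * W^2 : ℤ) : ℝ) := by exact_mod_cast hA₀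
        _ = (W:ℝ)^2 * ((2:ℝ)^n - 1) := by push_cast; ring
    calc Real.sqrt (((2 : ℝ) ^ (2 * n) - (imb q : ℝ) ^ 2) / ((2 : ℝ) ^ n - 1))
        ≤ Real.sqrt ((W:ℝ)^2) := Real.sqrt_le_sqrt hdiv
      _ = |(W:ℝ)| := Real.sqrt_sq_eq_abs _
      _ = ((|W| : ℤ) : ℝ) := by push_cast; ring
  have hle : rho q ≤ |W| := by
    rw [rho]
    exact Int.ceil_le.mpr hsqrt
  have hge : |W| ≤ rho q := hub A₀
  have hEq : rho q = |W| := le_antisymm hle hge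
  -- mod 4
  have hW4 : ((W : ZMod 4)) = ((2 * wt q : ℕ) : ZMod 4) := W_mod4 hn2 q f hf A₀
  have h4 : (4:ZMod 4) = 0 := by decide
  have habs : (((|W| : ℤ)) : ZMod 4) = ((2 * wt q : ℕ) : ZMod 4) := by
    rcases abs_choice W with hc | hc
    · rw [hc]; exact hW4
    · rw [hc]
      have hneg : ((-W : ℤ) : ZMod 4) = -((W : ZMod 4)) := by push_cast; ring
      rw [hneg, hW4]
      push_cast
      linear_combination (-(wt q : ZMod 4)) * h4
  constructor
  · rintro ⟨m, hm⟩
    have : ((2 * wt q : ℕ) : ZMod 4) = 0 := by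
      rw [hm]
      push_cast
      linear_combination ((m : ZMod 4)) * h4
    have hzero : ((rho q : ZMod 4)) = ((0:ℤ) : ZMod 4) := by
      rw [hEq, habs, this]
      norm_num
    exact (ZMod.intCast_eq_intCast_iff _ _ _).mp hzero
  · rintro ⟨m, hm⟩
    have : ((2 * wt q : ℕ) : ZMod 4) = 2 := by
      rw [hm]
      push_cast
      linear_combination ((m : ZMod 4)) * h4
    have htwo : ((rho q : ZMod 4)) = ((2:ℤ) : ZMod 4) := by
      rw [hEq, habs, this]
      norm_num
    exact (ZMod.intCast_eq_intCast_iff _ _ _).mp htwo
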